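/- For any positive reals P and a_1,...,a_K, the sum rate with vector normalization dominates that with matrix normalization: Σ_{k=1}^K log₂(1 + P/(K a_k)) ≥ K log₂(1 + P/(Σ_{k=1}^K a_k)). -/

import Mathlib

open Real Set

lemma logconv (c : ℝ) (hc : 0 < c) :
    ConvexOn ℝ (Set.Ioi (0:ℝ)) (fun x => Real.log (x + c) - Real.log x) := by
  have hI : interior (Set.Ioi (0:ℝ)) = Set.Ioi 0 := interior_Ioi
  apply convexOn_of_hasDerivWithinAt2_nonneg (f' := fun x => (x + c)⁻¹ - x⁻¹)
    (f'' := fun x => -((x + c) ^ 2)⁻¹ + (x ^ 2)⁻¹) (convex_Ioi 0)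
  · intro x hx
    have hx0 : x ≠ 0 := ne_of_gt hx
    have hxc : x + c ≠ 0 := ne_of_gt (by linarith [hx.out])
    have hadd : ContinuousAt (fun x : ℝ => x + c) x := by fun_prop
    exact ((hadd.log hxc).sub (Real.continuousAt_log hx0)).continuousWithinAt
  · intro x hx
    rw [hI] at hx
    have hx0 : x ≠ 0 := ne_of_gt hx
    have hxc : x + c ≠ 0 := ne_of_gt (by linarith [hx.out, hc])
    have h1 := (((hasDerivAt_id x).add_const c).log hxc).sub ((hasDerivAt_id x).log hx0)
    simp only [id_eq] at h1
    have heq : (1:ℝ) / (x + c) - 1 / x = (x + c)⁻¹ - x⁻¹ := by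
      rw [one_div, one_div]
    exact (heq ▸ h1).hasDerivWithinAt
  · intro x hx
    rw [hI] at hx
    have hx0 : x ≠ 0 := ne_of_gt hx
    have hxc : x + c ≠ 0 := ne_of_gt (by linarith [hx.out, hc])
    have h1 := (((hasDerivAt_id x).add_const c).inv hxc).sub ((hasDerivAt_id x).inv hx0)
    simp only [id_eq] at h1
    have heq : (-1:ℝ) / (x + c) ^ 2 - -1 / x ^ 2 = -((x + c) ^ 2)⁻¹ + (x ^ 2)⁻¹ := by
      field_simp
      ring
    exact (heq ▸ h1).hasDerivWithinAt
  · intro x hx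
    rw [hI] at hx
    have hx0 : (0:ℝ) < x := hx
    have h1 : x ^ 2 ≤ (x + c) ^ 2 := by nlinarith
    have h2 : (0:ℝ) < x ^ 2 := by positivity
    have h3 : ((x + c) ^ 2)⁻¹ ≤ (x ^ 2)⁻¹ := by
      apply inv_anti₀ h2 h1
    linarith

/-- For positive reals `P` and `a₁,...,a_K`, the ZF sum rate with vector normalization
dominates that with matrix normalization:
`∑ₖ log₂(1 + P/(K aₖ)) ≥ K log₂(1 + P/(∑ₖ aₖ))`. -/
theorem stmt_9 (K : ℕ) (hK : 0 < K) (P : ℝ) (hP : 0 < P)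
    (a : Fin K → ℝ) (ha : ∀ k, 0 < a k) :
    ∑ k, Real.logb 2 (1 + P / (K * a k))
      ≥ K * Real.logb 2 (1 + P / (∑ k, a k)) := by
  have hK0 : (0:ℝ) < K := by exact_mod_cast hK
  set c : ℝ := P / K with hc
  have hc0 : 0 < c := by positivity
  set S : ℝ := ∑ k, a k with hS
  have hS0 : 0 < S := Finset.sum_pos (fun k _ => ha k) ⟨⟨0, hK⟩, Finset.mem_univ _⟩
  have hlog2 : (0:ℝ) < Real.log 2 := Real.log_pos one_lt_two
  have key : ∀ x : ℝ, 0 < x →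
      Real.logb 2 (1 + P / (K * x)) = (Real.log (x + c) - Real.log x) / Real.log 2 := by
    intro x hx
    have h1 : 1 + P / (K * x) = (x + c) / x := by
      field_simp [hc]
      rw [hc, mul_add, mul_div_cancel₀ _ (ne_of_gt hK0)]
    rw [h1, Real.logb, Real.log_div (by positivity) (ne_of_gt hx)]
  have hconv := logconv c hc0
  have hjen := hconv.map_sum_le (t := Finset.univ) (w := fun _ : Fin K => (K:ℝ)⁻¹)
    (p := a) (fun i _ => by positivity)
    (by simp [Finset.sum_const, Finset.card_univ]; field_simp)
    (fun i _ => ha i)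
  have hsum : ∑ i : Fin K, (K:ℝ)⁻¹ • a i = S / K := by
    rw [← Finset.smul_sum]
    simp [smul_eq_mul, hS, div_eq_inv_mul]
  rw [hsum] at hjen
  simp only [smul_eq_mul, ← Finset.mul_sum] at hjen
  have hSK : 0 < S / K := by positivity
  have hmean : Real.logb 2 (1 + P / S) =
      (Real.log (S / K + c) - Real.log (S / K)) / Real.log 2 := by
    have h := key (S / K) hSK
    rw [← h]
    congr 2
    rw [mul_div_cancel₀ _ (ne_of_gt hK0)]
  have hKinv : (K:ℝ) * (K:ℝ)⁻¹ = 1 := mul_inv_cancel₀ (ne_of_gt hK0)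
  have h2 : (K:ℝ) * (Real.log (S / K + c) - Real.log (S / K))
      ≤ ∑ k, (Real.log (a k + c) - Real.log (a k)) := by
    have h := mul_le_mul_of_nonneg_left hjen hK0.le
    rwa [← mul_assoc, hKinv, one_mul] at h
  calc ∑ k, Real.logb 2 (1 + P / (K * a k))
      = (∑ k, (Real.log (a k + c) - Real.log (a k))) / Real.log 2 := by
        rw [Finset.sum_div]
        exact Finset.sum_congr rfl (fun k _ => key (a k) (ha k))
    _ ≥ ((K:ℝ) * (Real.log (S / K + c) - Real.log (S / K))) / Real.log 2 := by
        gcongr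
    _ = (K:ℝ) * ((Real.log (S / K + c) - Real.log (S / K)) / Real.log 2) := by ring
    _ = K * Real.logb 2 (1 + P / S) := by rw [hmean]
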